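/- No formula in the language {¬,∧,∨,𝐈} defines ■p on the class of all frames: consider the one-point reflexive model M with p both true and false at w₀, and the one-point irreflexive model M' with p both true and false at w₀'. Then every 𝐈-formula has the same supports of truth and falsity at w₀ and w₀', yet ■p is false at w₀ in M and not false at w₀' in M'. -/
import Mathlib


/-- Formulas of the language with ¬, ∧, ∨, □, ■, 𝐈 and ▲. -/
inductive Form : Type
  | var : ℕ → Form
  | neg : Form → Form
  | conj : Form → Form → Form
  | disj : Form → Form → Form
  | box : Form → Form
  | bbox : Form → Form
  | ign : Form → Form
  | tri : Form → Form

/-- A Kripke model for Belnap–Dunn modal logic. -/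
structure Model (W : Type) where
  R : W → W → Prop
  vp : ℕ → W → Prop
  vn : ℕ → W → Prop

mutual
  /-- support of truth -/
  def tr {W : Type} (M : Model W) : Form → W → Prop
    | .var n, w => M.vp n w
    | .neg φ, w => fa M φ w
    | .conj φ ψ, w => tr M φ w ∧ tr M ψ w
    | .disj φ ψ, w => tr M φ w ∨ tr M ψ w
    | .box φ, w => ∀ w', M.R w w' → tr M φ w'
    | .bbox φ, w => (∀ w', M.R w w' → tr M φ w') ∧
        ∀ w₁ w₂, M.R w w₁ → M.R w w₂ → fa M φ w₁ → fa M φ w₂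
    | .ign φ, w => tr M φ w ∧ (∀ w', M.R w w' → w' ≠ w → fa M φ w') ∧
        ∀ w₁ w₂, M.R w w₁ → w₁ ≠ w → M.R w w₂ → w₂ ≠ w → tr M φ w₁ → tr M φ w₂
    | .tri φ, w => (∀ w₁ w₂, M.R w w₁ → M.R w w₂ →
          (tr M φ w₁ → tr M φ w₂) ∧ (fa M φ w₁ → fa M φ w₂)) ∧
        ∀ w', M.R w w' → tr M φ w' ∨ fa M φ w'
  /-- support of falsity -/
  def fa {W : Type} (M : Model W) : Form → W → Prop
    | .var n, w => M.vn n w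
    | .neg φ, w => tr M φ w
    | .conj φ ψ, w => fa M φ w ∨ fa M ψ w
    | .disj φ ψ, w => fa M φ w ∧ fa M ψ w
    | .box φ, w => ∃ w', M.R w w' ∧ fa M φ w'
    | .bbox φ, w => (∃ w', M.R w w' ∧ fa M φ w') ∨
        ∃ w₁ w₂, M.R w w₁ ∧ M.R w w₂ ∧ tr M φ w₁ ∧ ¬ tr M φ w₂
    | .ign φ, w => fa M φ w ∨ (∃ w', M.R w w' ∧ w' ≠ w ∧ tr M φ w') ∨
        ∃ w₁ w₂, (M.R w w₁ ∧ w₁ ≠ w) ∧ (M.R w w₂ ∧ w₂ ≠ w) ∧ ¬ fa M φ w₁ ∧ fa M φ w₂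
    | .tri φ, w => (∃ w₁ w₂, M.R w w₁ ∧ M.R w w₂ ∧ tr M φ w₁ ∧ ¬ tr M φ w₂) ∨
        (∃ w₁ w₂, M.R w w₁ ∧ M.R w w₂ ∧ fa M φ w₁ ∧ ¬ fa M φ w₂) ∨
        (∃ w₁ w₂, M.R w w₁ ∧ M.R w w₂ ∧ tr M φ w₁ ∧ fa M φ w₂)
end

/-- φ contains an occurrence of □ -/
def hasBox : Form → Prop
  | .var _ => False
  | .neg φ => hasBox φ
  | .conj φ ψ => hasBox φ ∨ hasBox ψ
  | .disj φ ψ => hasBox φ ∨ hasBox ψ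
  | .box _ => True
  | .bbox φ => hasBox φ
  | .ign φ => hasBox φ
  | .tri φ => hasBox φ

/-- φ contains an occurrence of ■ -/
def hasBBox : Form → Prop
  | .var _ => False
  | .neg φ => hasBBox φ
  | .conj φ ψ => hasBBox φ ∨ hasBBox ψ
  | .disj φ ψ => hasBBox φ ∨ hasBBox ψ
  | .box φ => hasBBox φ
  | .bbox _ => True
  | .ign φ => hasBBox φ
  | .tri φ => hasBBox φ

/-- φ contains an occurrence of 𝐈 -/
def hasIgn : Form → Prop
  | .var _ => False
  | .neg φ => hasIgn φ
  | .conj φ ψ => hasIgn φ ∨ hasIgn ψ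
  | .disj φ ψ => hasIgn φ ∨ hasIgn ψ
  | .box φ => hasIgn φ
  | .bbox φ => hasIgn φ
  | .ign _ => True
  | .tri φ => hasIgn φ

/-- φ contains an occurrence of ▲ -/
def hasTri : Form → Prop
  | .var _ => False
  | .neg φ => hasTri φ
  | .conj φ ψ => hasTri φ ∨ hasTri ψ
  | .disj φ ψ => hasTri φ ∨ hasTri ψ
  | .box φ => hasTri φ
  | .bbox φ => hasTri φ
  | .ign φ => hasTri φ
  | .tri _ => True

/-- validity of the sequent φ ⊢ χ on the frame (W,R) -/
def validOn {W : Type} (R : W → W → Prop) (φ χ : Form) : Prop :=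
  ∀ (vp vn : ℕ → W → Prop) (w : W), tr ⟨R, vp, vn⟩ φ w → tr ⟨R, vp, vn⟩ χ w

/-- ♦φ := ¬■¬φ -/
def dia (φ : Form) : Form := .neg (.bbox (.neg φ))

/-- no {¬,∧,∨,𝐈}-formula defines ■p on the class of all frames. -/
theorem ign_cannot_define_bbox :
    let M : Model Unit := ⟨fun _ _ => True, fun _ _ => True, fun _ _ => True⟩
    let M' : Model Unit := ⟨fun _ _ => False, fun _ _ => True, fun _ _ => True⟩
    (∀ φ : Form, ¬ hasBox φ → ¬ hasBBox φ → ¬ hasTri φ →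
      ((tr M φ () ↔ tr M' φ ()) ∧ (fa M φ () ↔ fa M' φ ()))) ∧
    fa M (.bbox (.var 0)) () ∧ ¬ fa M' (.bbox (.var 0)) () := by
  refine ⟨?_, ?_, ?_⟩
  · intro φ hb hbb ht
    induction φ with
    | var n => exact ⟨Iff.rfl, Iff.rfl⟩
    | neg φ ih =>
        obtain ⟨i1, i2⟩ := ih hb hbb ht
        exact ⟨by simpa [tr] using i2, by simpa [fa] using i1⟩
    | conj φ ψ ih1 ih2 =>
        obtain ⟨a1, a2⟩ := ih1 (fun h => hb (Or.inl h)) (fun h => hbb (Or.inl h)) (fun h => ht (Or.inl h))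
        obtain ⟨b1, b2⟩ := ih2 (fun h => hb (Or.inr h)) (fun h => hbb (Or.inr h)) (fun h => ht (Or.inr h))
        constructor
        · simp only [tr]; rw [a1, b1]
        · simp only [fa]; rw [a2, b2]
    | disj φ ψ ih1 ih2 =>
        obtain ⟨a1, a2⟩ := ih1 (fun h => hb (Or.inl h)) (fun h => hbb (Or.inl h)) (fun h => ht (Or.inl h))
        obtain ⟨b1, b2⟩ := ih2 (fun h => hb (Or.inr h)) (fun h => hbb (Or.inr h)) (fun h => ht (Or.inr h))
        constructor
        · simp only [tr]; rw [a1, b1]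
        · simp only [fa]; rw [a2, b2]
    | box φ ih => exact absurd trivial hb
    | bbox φ ih => exact absurd trivial hbb
    | tri φ ih => exact absurd trivial ht
    | ign φ ih =>
        obtain ⟨i1, i2⟩ := ih hb hbb ht
        constructor
        · simp only [tr]
          constructor
          · rintro ⟨h, -, -⟩
            exact ⟨i1.mp h, fun w' h' => h'.elim, fun w₁ w₂ h' => h'.elim⟩
          · rintro ⟨h, -, -⟩
            exact ⟨i1.mpr h, fun w' _ hne => absurd rfl hne, fun w₁ w₂ _ hne => absurd rfl hne⟩
        · simp only [fa]
          constructor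
          · rintro (h | ⟨w', _, hne, _⟩ | ⟨w₁, w₂, ⟨_, hne⟩, _⟩)
            · exact Or.inl (i2.mp h)
            · exact absurd rfl hne
            · exact absurd rfl hne
          · rintro (h | ⟨w', _, hne, _⟩ | ⟨w₁, w₂, ⟨_, hne⟩, _⟩)
            · exact Or.inl (i2.mpr h)
            · exact absurd rfl hne
            · exact absurd rfl hne
  · exact Or.inl ⟨(), trivial, trivial⟩
  · rintro (⟨w', h, -⟩ | ⟨w₁, w₂, h, -⟩) <;> exact h
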